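/- Let T : X → X be a bounded linear operator on a Banach space X, and suppose φ₁, …, φ_M ∈ X with ‖φ_i‖ = 1 have pairwise disjoint supports (in an L^p(Γ) setting: supp φ_i ⊆ Γ_i with Γ_i non-overlapping subtrees), and suppose that for each i and every scalar α, ‖T φ_i − α v‖_{p,Γ_i} > ε for a fixed function v. If moreover for every finite linear combination φ = Σ λ_i φ_i the restriction of Tφ to Γ_i equals λ_i T φ_i + η_i v for some scalar η_i, then the M-th approximation number satisfies a_M(T) ≥ ε. -/

import Mathlib

open MeasureTheory ENNReal

/-- Key lemma: if `g` vanishes a.e. off a finite disjoint union `⋃ Γ i` and on each piece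
`c * ‖g‖_{p,Γ i} ≤ ‖f‖_{p,Γ i}`, then `c * ‖g‖_p ≤ ‖f‖_p`. -/
lemma key_piece {Ω : Type*} [MeasurableSpace Ω] (μ : Measure Ω) (p : ℝ≥0∞) (hp : p ≠ 0)
    {M : ℕ} (hM : 0 < M) (Γ : Fin M → Set Ω) (hΓ : ∀ i, MeasurableSet (Γ i))
    (hdisj : Pairwise (Function.onFun Disjoint Γ)) (g f : Ω → ℝ) (c : ℝ≥0∞)
    (hg0 : ∀ᵐ x ∂μ, x ∉ ⋃ i, Γ i → g x = 0)
    (hpiece : ∀ i, c * eLpNorm g p (μ.restrict (Γ i)) ≤ eLpNorm f p (μ.restrict (Γ i))) :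
    c * eLpNorm g p μ ≤ eLpNorm f p μ := by
  have hUm : MeasurableSet (⋃ i, Γ i) := MeasurableSet.iUnion hΓ
  have hgU : eLpNorm g p μ = eLpNorm g p (μ.restrict (⋃ i, Γ i)) := by
    rw [← eLpNorm_indicator_eq_eLpNorm_restrict hUm]
    refine eLpNorm_congr_ae ?_
    filter_upwards [hg0] with x hx
    by_cases h : x ∈ ⋃ i, Γ i
    · simp [Set.indicator_of_mem h]
    · simp [Set.indicator_of_notMem h, hx h]
  rcases eq_or_ne p ∞ with hptop | hptop
  · subst hptop
    haveI : Nonempty (Fin M) := Fin.pos_iff_nonempty.mp hM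
    have hle : eLpNorm g ∞ (μ.restrict (⋃ i, Γ i))
        ≤ ⨆ i, eLpNorm g ∞ (μ.restrict (Γ i)) := by
      simp only [eLpNorm_exponent_top, eLpNormEssSup]
      have hae : ∀ᵐ x ∂(μ.restrict (⋃ i, Γ i)), (‖g x‖₊ : ℝ≥0∞)
          ≤ ⨆ i, essSup (fun x => (‖g x‖₊ : ℝ≥0∞)) (μ.restrict (Γ i)) := by
        rw [ae_restrict_iUnion_iff]
        intro i
        refine (ae_le_essSup (μ := μ.restrict (Γ i))
          (fun x => (‖g x‖₊ : ℝ≥0∞))).mono fun x hx => hx.trans ?_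
        exact le_iSup (fun i => essSup (fun x => (‖g x‖₊ : ℝ≥0∞)) (μ.restrict (Γ i))) i
      exact essSup_le_of_ae_le _ hae
    obtain ⟨i0, hi0⟩ := exists_eq_ciSup_of_finite
      (f := fun i => eLpNorm g ∞ (μ.restrict (Γ i)))
    calc c * eLpNorm g ∞ μ = c * eLpNorm g ∞ (μ.restrict (⋃ i, Γ i)) := by rw [hgU]
      _ ≤ c * ⨆ i, eLpNorm g ∞ (μ.restrict (Γ i)) := mul_le_mul_right hle c
      _ = c * eLpNorm g ∞ (μ.restrict (Γ i0)) := by rw [hi0]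
      _ ≤ eLpNorm f ∞ (μ.restrict (Γ i0)) := hpiece i0
      _ ≤ eLpNorm f ∞ μ := eLpNorm_mono_measure f Measure.restrict_le_self
  · set q := p.toReal with hq_def
    have hq : 0 < q := ENNReal.toReal_pos hp hptop
    have hsn : ∀ (h : Ω → ℝ) (ν : Measure Ω),
        eLpNorm h p ν = (∫⁻ x, (‖h x‖₊ : ℝ≥0∞) ^ q ∂ν) ^ (1 / q) := fun h ν =>
      by rw [eLpNorm_eq_lintegral_rpow_enorm_toReal hp hptop]; simp only [enorm_eq_nnnorm, hq_def]
    -- total integral of g over μ equals sum over the pieces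
    have hg_tot : ∫⁻ x, (‖g x‖₊ : ℝ≥0∞) ^ q ∂μ
        = ∑' i, ∫⁻ x in Γ i, (‖g x‖₊ : ℝ≥0∞) ^ q ∂μ := by
      rw [← lintegral_iUnion hΓ hdisj]
      rw [← lintegral_add_compl (fun x => (‖g x‖₊ : ℝ≥0∞) ^ q) hUm]
      have h0 : ∫⁻ x in (⋃ i, Γ i)ᶜ, (‖g x‖₊ : ℝ≥0∞) ^ q ∂μ = 0 := by
        have hz : ∀ᵐ x ∂(μ.restrict (⋃ i, Γ i)ᶜ), (‖g x‖₊ : ℝ≥0∞) ^ q = 0 := by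
          rw [ae_restrict_iff' hUm.compl]
          filter_upwards [hg0] with x hx hxc
          simp [hx hxc, ENNReal.zero_rpow_of_pos hq]
        rw [lintegral_congr_ae hz, lintegral_zero]
      rw [h0, add_zero]
    have hf_tot : ∑' i, ∫⁻ x in Γ i, (‖f x‖₊ : ℝ≥0∞) ^ q ∂μ
        ≤ ∫⁻ x, (‖f x‖₊ : ℝ≥0∞) ^ q ∂μ := by
      rw [← lintegral_iUnion hΓ hdisj]
      exact lintegral_mono' Measure.restrict_le_self le_rfl
    have hpq : ∀ i, c ^ q * ∫⁻ x in Γ i, (‖g x‖₊ : ℝ≥0∞) ^ q ∂μ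
        ≤ ∫⁻ x in Γ i, (‖f x‖₊ : ℝ≥0∞) ^ q ∂μ := by
      intro i
      have h := hpiece i
      rw [hsn g, hsn f] at h
      calc c ^ q * ∫⁻ x in Γ i, (‖g x‖₊ : ℝ≥0∞) ^ q ∂μ
          = (c * (∫⁻ x in Γ i, (‖g x‖₊ : ℝ≥0∞) ^ q ∂μ) ^ (1 / q)) ^ q := by
            rw [ENNReal.mul_rpow_of_nonneg _ _ hq.le, ← ENNReal.rpow_mul,
              one_div, inv_mul_cancel₀ hq.ne', ENNReal.rpow_one]
        _ ≤ ((∫⁻ x in Γ i, (‖f x‖₊ : ℝ≥0∞) ^ q ∂μ) ^ (1 / q)) ^ q :=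
            ENNReal.rpow_le_rpow h hq.le
        _ = ∫⁻ x in Γ i, (‖f x‖₊ : ℝ≥0∞) ^ q ∂μ := by
            rw [← ENNReal.rpow_mul, one_div, inv_mul_cancel₀ hq.ne', ENNReal.rpow_one]
    rw [hsn g μ, hsn f μ, hg_tot]
    calc c * (∑' i, ∫⁻ x in Γ i, (‖g x‖₊ : ℝ≥0∞) ^ q ∂μ) ^ (1 / q)
        = (c ^ q * ∑' i, ∫⁻ x in Γ i, (‖g x‖₊ : ℝ≥0∞) ^ q ∂μ) ^ (1 / q) := by
          rw [ENNReal.mul_rpow_of_nonneg _ _ (by positivity : (0:ℝ) ≤ 1/q),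
            ← ENNReal.rpow_mul, mul_one_div_cancel hq.ne', ENNReal.rpow_one]
      _ = (∑' i, c ^ q * ∫⁻ x in Γ i, (‖g x‖₊ : ℝ≥0∞) ^ q ∂μ) ^ (1 / q) := by
          rw [ENNReal.tsum_mul_left]
      _ ≤ (∑' i, ∫⁻ x in Γ i, (‖f x‖₊ : ℝ≥0∞) ^ q ∂μ) ^ (1 / q) :=
          ENNReal.rpow_le_rpow (ENNReal.tsum_le_tsum hpq) (by positivity)
      _ ≤ (∫⁻ x, (‖f x‖₊ : ℝ≥0∞) ^ q ∂μ) ^ (1 / q) :=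
          ENNReal.rpow_le_rpow hf_tot (by positivity)

/-- Coercion of a finite sum in `Lp` agrees a.e. with the sum of coercions. -/
lemma Lp.coeFn_finsetSum {α ι : Type*} [MeasurableSpace α] {μ : MeasureTheory.Measure α}
    {p : ℝ≥0∞} (s : Finset ι) (f : ι → Lp ℝ p μ) :
    ⇑(∑ i ∈ s, f i) =ᵐ[μ] fun x => ∑ i ∈ s, (f i : α → ℝ) x := by
  classical
  induction s using Finset.induction_on with
  | empty =>
      simp only [Finset.sum_empty]
      filter_upwards [Lp.coeFn_zero ℝ p μ] with x hx using hx
  | insert a s' hnotmem ih =>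
      rw [Finset.sum_insert hnotmem]
      filter_upwards [Lp.coeFn_add (f a) (∑ i ∈ s', f i), ih] with x hx hx2
      rw [hx]
      simp only [Pi.add_apply, hx2, Finset.sum_insert hnotmem]

/-- The `m`-th approximation number of a bounded operator `T`:
`a_m(T) = inf {‖T − P‖ : rank P < m}`. -/
noncomputable def approxNum {E F : Type*} [NormedAddCommGroup E] [NormedSpace ℝ E]
    [NormedAddCommGroup F] [NormedSpace ℝ F] (T : E →L[ℝ] F) (m : ℕ) : ℝ :=
  sInf {c : ℝ | ∃ P : E →L[ℝ] F, LinearMap.rank (P : E →ₗ[ℝ] F) < m ∧ ‖T - P‖ = c}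

/-- (Abstract form of Lemma 3.17.) Let `T` be a bounded operator on
`L^p(μ)`, `φ₁, …, φ_M` norm-one functions with supports in pairwise disjoint sets `Γ_i`, such
that `‖Tφ_i − α v‖_{p,Γ_i} > ε` for all scalars `α`, and such that on each `Γ_i` the image of
any linear combination `Σ λ_j φ_j` equals `λ_i Tφ_i + η_i v` for some scalar `η_i`. Then
`a_M(T) ≥ ε`. -/
theorem stmt_11 {Ω : Type*} [MeasurableSpace Ω] (μ : Measure Ω) (p : ℝ≥0∞) [Fact (1 ≤ p)]
    (T : Lp ℝ p μ →L[ℝ] Lp ℝ p μ) (v : Ω → ℝ) (M : ℕ) (hM : 0 < M)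
    (Γ : Fin M → Set Ω) (hΓ : ∀ i, MeasurableSet (Γ i))
    (hdisj : Pairwise fun i j => Disjoint (Γ i) (Γ j))
    (φ : Fin M → Lp ℝ p μ) (hnorm : ∀ i, ‖φ i‖ = 1)
    (hsupp : ∀ i, (φ i : Ω → ℝ) =ᵐ[μ.restrict (Γ i)ᶜ] 0)
    (ε : ℝ) (hε : 0 ≤ ε)
    (hfar : ∀ (i : Fin M) (α : ℝ),
      ENNReal.ofReal ε < eLpNorm (fun x => (T (φ i) : Ω → ℝ) x - α * v x) p (μ.restrict (Γ i)))
    (hrestrict : ∀ (lam : Fin M → ℝ) (i : Fin M), ∃ η : ℝ,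
      (T (∑ j, lam j • φ j) : Ω → ℝ)
        =ᵐ[μ.restrict (Γ i)] fun x => lam i * (T (φ i) : Ω → ℝ) x + η * v x) :
    ε ≤ approxNum T M := by
  have hp1 : (1 : ℝ≥0∞) ≤ p := Fact.out
  have hp0 : p ≠ 0 := (zero_lt_one.trans_le hp1).ne'
  -- the infimum is over a nonempty set
  have hne : Set.Nonempty {c : ℝ | ∃ P : Lp ℝ p μ →L[ℝ] Lp ℝ p μ,
      LinearMap.rank (P : Lp ℝ p μ →ₗ[ℝ] Lp ℝ p μ) < M ∧ ‖T - P‖ = c} := by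
    refine ⟨‖T - 0‖, 0, ?_, rfl⟩
    simp only [ContinuousLinearMap.coe_zero, LinearMap.rank_zero]
    exact_mod_cast hM
  refine le_csInf hne ?_
  rintro c ⟨P, hPrank, rfl⟩
  -- find a nonzero kernel element of `lam ↦ P (∑ lam i • φ i)`
  obtain ⟨lam, hlam0, hPlam⟩ : ∃ lam : Fin M → ℝ, lam ≠ 0 ∧ P (∑ j, lam j • φ j) = 0 := by
    by_contra h
    push_neg at h
    set L : (Fin M → ℝ) →ₗ[ℝ] Lp ℝ p μ :=
      (P : Lp ℝ p μ →ₗ[ℝ] Lp ℝ p μ) ∘ₗ Fintype.linearCombination ℝ φ with hL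
    have hker : ∀ lamv : Fin M → ℝ, L lamv = 0 → lamv = 0 := by
      intro lamv hl
      by_contra hlam
      refine h lamv hlam ?_
      simpa [hL, Fintype.linearCombination_apply] using hl
    have hinj : Function.Injective L :=
      LinearMap.ker_eq_bot.mp (LinearMap.ker_eq_bot'.mpr hker)
    have hrank : (M : Cardinal) ≤ LinearMap.rank (P : Lp ℝ p μ →ₗ[ℝ] Lp ℝ p μ) := by
      have h1 : LinearMap.rank L = (M : Cardinal) := by
        have e := lift_rank_range_of_injective L hinj
        rw [rank_fin_fun] at e
        have e2 : Module.rank ℝ ↥(LinearMap.range L) = (M : Cardinal) := by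
          simpa [Cardinal.lift_uzero, Cardinal.lift_natCast] using e
        exact e2
      calc (M : Cardinal) = LinearMap.rank L := h1.symm
        _ ≤ LinearMap.rank (P : Lp ℝ p μ →ₗ[ℝ] Lp ℝ p μ) :=
          LinearMap.rank_comp_le_left _ _
    exact absurd (hrank.trans_lt hPrank) (lt_irrefl _)
  set φs : Lp ℝ p μ := ∑ j, lam j • φ j with hφs
  -- basic a.e. facts
  have hsupp' : ∀ j, ∀ᵐ x ∂μ, x ∈ (Γ j)ᶜ → (φ j : Ω → ℝ) x = 0 := fun j =>
    (ae_restrict_iff' (hΓ j).compl).1 (hsupp j)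
  have hcoe_sum : (φs : Ω → ℝ) =ᵐ[μ] fun x => ∑ j, lam j * (φ j : Ω → ℝ) x := by
    rw [hφs]
    filter_upwards [Lp.coeFn_finsetSum Finset.univ (fun j => lam j • φ j),
      ae_all_iff.2 fun j => Lp.coeFn_smul (lam j) (φ j)] with x hx hx2
    rw [hx]
    exact Finset.sum_congr rfl fun j _ => by rw [hx2 j]; simp
  -- `φs = lam i • φ i` a.e. on `Γ i`
  have hφs_i : ∀ i, (φs : Ω → ℝ)
      =ᵐ[μ.restrict (Γ i)] fun x => lam i * (φ i : Ω → ℝ) x := by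
    intro i
    have hothers : ∀ᵐ x ∂μ.restrict (Γ i), ∀ j, j ≠ i → (φ j : Ω → ℝ) x = 0 := by
      rw [ae_all_iff]
      intro j
      rcases eq_or_ne j i with rfl | hji
      · simp
      · have hsub : Γ i ⊆ (Γ j)ᶜ := Set.subset_compl_iff_disjoint_left.2 (hdisj hji)
        have := (hsupp j).filter_mono (ae_mono (Measure.restrict_mono hsub le_rfl))
        filter_upwards [this] with x hx _
        exact hx
    filter_upwards [ae_restrict_of_ae hcoe_sum, hothers] with x hx hoth
    rw [hx, Finset.sum_eq_single i (fun j _ hji => by rw [hoth j hji, mul_zero])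
      (fun h => absurd (Finset.mem_univ i) h)]
  -- `eLpNorm φ i` over `Γ i` is 1
  have hone : ∀ i, eLpNorm ((φ i : Ω → ℝ)) p (μ.restrict (Γ i)) = 1 := by
    intro i
    have h1 : eLpNorm ((φ i : Ω → ℝ)) p μ = 1 := by
      have h2 := Lp.norm_def (φ i)
      rw [hnorm i] at h2
      rw [← ENNReal.ofReal_toReal (Lp.eLpNorm_ne_top (φ i)), ← h2, ENNReal.ofReal_one]
    rw [← eLpNorm_indicator_eq_eLpNorm_restrict (hΓ i), ← h1]
    refine eLpNorm_congr_ae ?_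
    filter_upwards [hsupp' i] with x hx
    by_cases h : x ∈ Γ i
    · simp [Set.indicator_of_mem h]
    · simp [Set.indicator_of_notMem h, hx h]
  have hφs_norm_i : ∀ i, eLpNorm ((φs : Ω → ℝ)) p (μ.restrict (Γ i))
      = (‖lam i‖₊ : ℝ≥0∞) := by
    intro i
    rw [eLpNorm_congr_ae (hφs_i i)]
    have : (fun x => lam i * (φ i : Ω → ℝ) x) = lam i • ((φ i : Ω → ℝ)) := by
      funext x; simp [smul_eq_mul]
    rw [this, eLpNorm_const_smul, hone i]
    simp [enorm_eq_nnnorm]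
  -- the piecewise lower bound for `T φs`
  have hpiece : ∀ i, ENNReal.ofReal ε * eLpNorm ((φs : Ω → ℝ)) p (μ.restrict (Γ i))
      ≤ eLpNorm ((T φs : Ω → ℝ)) p (μ.restrict (Γ i)) := by
    intro i
    obtain ⟨η, hη⟩ := hrestrict lam i
    rw [← hφs] at hη
    rcases eq_or_ne (lam i) 0 with hli | hli
    · rw [hφs_norm_i i, hli]
      simp
    · set α : ℝ := -η / lam i with hα
      have hαη : lam i * α = -η := by
        rw [hα, mul_comm]; exact div_mul_cancel₀ _ hli
      have heq : (fun x => lam i * (T (φ i) : Ω → ℝ) x + η * v x)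
          = lam i • (fun x => (T (φ i) : Ω → ℝ) x - α * v x) := by
        funext x
        simp only [Pi.smul_apply, smul_eq_mul]
        rw [mul_sub, ← mul_assoc, hαη]
        ring
      calc ENNReal.ofReal ε * eLpNorm ((φs : Ω → ℝ)) p (μ.restrict (Γ i))
          = ENNReal.ofReal ε * (‖lam i‖₊ : ℝ≥0∞) := by rw [hφs_norm_i i]
        _ = (‖lam i‖₊ : ℝ≥0∞) * ENNReal.ofReal ε := mul_comm _ _
        _ ≤ (‖lam i‖₊ : ℝ≥0∞) * eLpNorm (fun x => (T (φ i) : Ω → ℝ) x - α * v x) p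
            (μ.restrict (Γ i)) := mul_le_mul_right (hfar i α).le _
        _ = eLpNorm (lam i • fun x => (T (φ i) : Ω → ℝ) x - α * v x) p
            (μ.restrict (Γ i)) := by rw [eLpNorm_const_smul, enorm_eq_nnnorm]
        _ = eLpNorm ((T φs : Ω → ℝ)) p (μ.restrict (Γ i)) := by
            rw [← heq, ← eLpNorm_congr_ae hη]
  -- `φs` vanishes a.e. off the union
  have hg0 : ∀ᵐ x ∂μ, x ∉ ⋃ i, Γ i → (φs : Ω → ℝ) x = 0 := by
    filter_upwards [hcoe_sum, ae_all_iff.2 hsupp'] with x hx hall hxU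
    rw [hx]
    refine Finset.sum_eq_zero fun j _ => ?_
    rw [hall j (fun hmem => hxU (Set.mem_iUnion.2 ⟨j, hmem⟩)), mul_zero]
  -- apply the key lemma
  have hkey := key_piece μ p hp0 hM Γ hΓ hdisj ((φs : Ω → ℝ)) ((T φs : Ω → ℝ))
    (ENNReal.ofReal ε) hg0 hpiece
  -- convert to real norms
  have hreal : ε * ‖φs‖ ≤ ‖T φs‖ := by
    have h1 : (ENNReal.ofReal ε * eLpNorm ((φs : Ω → ℝ)) p μ).toReal = ε * ‖φs‖ := by
      rw [ENNReal.toReal_mul, ENNReal.toReal_ofReal hε, Lp.norm_def]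
    have h2 : (eLpNorm ((T φs : Ω → ℝ)) p μ).toReal = ‖T φs‖ := (Lp.norm_def _).symm
    rw [← h1, ← h2]
    exact ENNReal.toReal_mono (Lp.eLpNorm_ne_top (T φs)) hkey
  -- `φs ≠ 0`
  have hφs_pos : 0 < ‖φs‖ := by
    rw [norm_pos_iff]
    intro h0
    obtain ⟨i, hi⟩ := Function.ne_iff.1 hlam0
    have hz : (φs : Ω → ℝ) =ᵐ[μ] 0 := by rw [h0]; exact Lp.coeFn_zero ℝ p μ
    have : eLpNorm ((φs : Ω → ℝ)) p (μ.restrict (Γ i)) = 0 := by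
      rw [eLpNorm_congr_ae (ae_restrict_of_ae hz), eLpNorm_zero]
    rw [hφs_norm_i i] at this
    simp only [ENNReal.coe_eq_zero, nnnorm_eq_zero] at this
    exact hi this
  -- conclude
  have hTφs : ‖T φs‖ = ‖(T - P) φs‖ := by
    rw [ContinuousLinearMap.sub_apply, hφs, hPlam, sub_zero]
  have hfinal : ε * ‖φs‖ ≤ ‖T - P‖ * ‖φs‖ := by
    calc ε * ‖φs‖ ≤ ‖T φs‖ := hreal
      _ = ‖(T - P) φs‖ := hTφs
      _ ≤ ‖T - P‖ * ‖φs‖ := (T - P).le_opNorm φs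
  exact le_of_mul_le_mul_right hfinal hφs_pos
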